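/- arXiv:math/0605771 — 2 statements merged into one kernel-verified Lean document; each statement's English description precedes it below -/
import Mathlib

section
/- Let X be a real normed space, D ⊆ X open, f : D → ℝ locally Lipschitz, and p ∈ D. Then the Clarke generalized directional derivative h ↦ f°(p,h) := limsup_{x→p, t→0⁺} (f(x+th) − f(x))/t is finite, positively homogeneous, and subadditive (hence sublinear) in h. -/
open Filter Topology Pointwise

variable {X : Type*} [NormedAddCommGroup X] [NormedSpace ℝ X]

/-- `f` is locally Lipschitz on `D`. -/
def LocallyLipschitzOnSet {Y : Type*} [NormedAddCommGroup Y] [NormedSpace ℝ Y]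
    (D : Set X) (f : X → Y) : Prop :=
  ∀ p ∈ D, ∃ K : NNReal, ∃ U ∈ 𝓝 p, LipschitzOnWith K f U

/-- Clarke's generalized directional derivative of `f` at `p` in direction `h`. -/
noncomputable def clarkeDeriv (f : X → ℝ) (p h : X) : ℝ :=
  limsup (fun q : X × ℝ => (f (q.1 + q.2 • h) - f q.1) / q.2)
    ((𝓝 p) ×ˢ (𝓝[>] (0 : ℝ)))

/-- Clarke's generalized gradient of `f` at `p`. -/
def clarkeGradient (f : X → ℝ) (p : X) : Set (X →L[ℝ] ℝ) :=
  {ζ | ∀ h : X, ζ h ≤ clarkeDeriv f p h}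

/-- The Clarke generalized directional derivative is finite, positively homogeneous
and subadditive in the direction. -/
theorem clarkeDeriv_sublinear (D : Set X) (hD : IsOpen D) (f : X → ℝ)
    (hf : LocallyLipschitzOnSet D f) (p : X) (hp : p ∈ D) :
    (∀ h : X,
        IsBoundedUnder (· ≤ ·) ((𝓝 p) ×ˢ (𝓝[>] (0 : ℝ)))
          (fun q : X × ℝ => (f (q.1 + q.2 • h) - f q.1) / q.2) ∧
        IsBoundedUnder (· ≥ ·) ((𝓝 p) ×ˢ (𝓝[>] (0 : ℝ)))
          (fun q : X × ℝ => (f (q.1 + q.2 • h) - f q.1) / q.2)) ∧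
    (∀ (c : ℝ), 0 < c → ∀ h : X, clarkeDeriv f p (c • h) = c * clarkeDeriv f p h) ∧
    (∀ h₁ h₂ : X, clarkeDeriv f p (h₁ + h₂) ≤ clarkeDeriv f p h₁ + clarkeDeriv f p h₂) := by
  obtain ⟨K, U, hU, hLip⟩ := hf p hp
  obtain ⟨ε, hε, hball⟩ := Metric.mem_nhds_iff.mp hU
  set F : Filter (X × ℝ) := (𝓝 p) ×ˢ (𝓝[>] (0 : ℝ)) with hFdef
  set Q : X → X × ℝ → ℝ := fun h q => (f (q.1 + q.2 • h) - f q.1) / q.2 with hQdef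
  haveI : F.NeBot := by
    rw [hFdef]; exact Filter.prod_neBot.mpr ⟨inferInstance, inferInstance⟩
  -- Key eventual bound
  have key : ∀ h : X, ∀ᶠ q in F, |Q h q| ≤ (K : ℝ) * ‖h‖ := by
    intro h
    have h1 : Metric.ball p (ε / 2) ∈ 𝓝 p := Metric.ball_mem_nhds p (by linarith)
    have h2 : Set.Ioo (0 : ℝ) (ε / 2 / (‖h‖ + 1)) ∈ 𝓝[>] (0 : ℝ) :=
      Ioo_mem_nhdsGT_of_mem ⟨le_refl _, by positivity⟩
    filter_upwards [Filter.prod_mem_prod h1 h2] with q hq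
    obtain ⟨hx, ht⟩ := hq
    obtain ⟨ht0, htlt⟩ := ht
    have hxU : q.1 ∈ U := hball (by
      have : dist q.1 p < ε := lt_of_lt_of_le hx (by linarith)
      exact Metric.mem_ball.mpr this)
    have hth : q.2 * ‖h‖ < ε / 2 := by
      calc q.2 * ‖h‖ ≤ q.2 * (‖h‖ + 1) := by nlinarith [norm_nonneg h]
        _ < ε / 2 / (‖h‖ + 1) * (‖h‖ + 1) := by
            apply mul_lt_mul_of_pos_right htlt; positivity
        _ = ε / 2 := div_mul_cancel₀ _ (by positivity)
    have hyU : q.1 + q.2 • h ∈ U := hball (by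
      rw [Metric.mem_ball, dist_eq_norm]
      calc ‖q.1 + q.2 • h - p‖ ≤ ‖q.1 - p‖ + ‖q.2 • h‖ := by
            rw [add_sub_right_comm]; exact norm_add_le _ _
        _ < ε / 2 + ε / 2 := by
            apply add_lt_add
            · rw [← dist_eq_norm]; exact hx
            · rw [norm_smul, Real.norm_eq_abs, abs_of_pos ht0]; exact hth
        _ = ε := by ring)
    have hd : |f (q.1 + q.2 • h) - f q.1| ≤ (K : ℝ) * (q.2 * ‖h‖) := by
      have := hLip.dist_le_mul _ hyU _ hxU
      rw [Real.dist_eq, dist_eq_norm] at this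
      simpa [norm_smul, Real.norm_eq_abs, abs_of_pos ht0] using this
    rw [hQdef, abs_div, abs_of_pos ht0, div_le_iff₀ ht0]
    calc |f (q.1 + q.2 • h) - f q.1| ≤ (K : ℝ) * (q.2 * ‖h‖) := hd
      _ = (K : ℝ) * ‖h‖ * q.2 := by ring
  have bddle : ∀ h : X, IsBoundedUnder (· ≤ ·) F (Q h) := fun h =>
    ⟨(K : ℝ) * ‖h‖, Filter.eventually_map.mpr <| (key h).mono fun q hq => (abs_le.mp hq).2⟩
  have bddge : ∀ h : X, IsBoundedUnder (· ≥ ·) F (Q h) := fun h =>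
    ⟨-((K : ℝ) * ‖h‖), Filter.eventually_map.mpr <| (key h).mono fun q hq => (abs_le.mp hq).1⟩
  refine ⟨fun h => ⟨bddle h, bddge h⟩, ?_, ?_⟩
  · -- positive homogeneity
    intro c hc h
    have hcne : c ≠ 0 := hc.ne'
    -- the map t ↦ t / c preserves 𝓝[>] 0
    have hmap1 : Filter.Tendsto (fun t : ℝ => t / c) (𝓝[>] 0) (𝓝[>] 0) := by
      apply tendsto_nhdsWithin_of_tendsto_nhds_of_eventually_within
      · have : Filter.Tendsto (fun t : ℝ => t / c) (𝓝 0) (𝓝 (0 / c)) :=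
          tendsto_id.div_const c
        simpa using this.mono_left nhdsWithin_le_nhds
      · filter_upwards [self_mem_nhdsWithin] with t ht
        exact div_pos ht hc
    have hmap2 : Filter.Tendsto (fun t : ℝ => t * c) (𝓝[>] 0) (𝓝[>] 0) := by
      apply tendsto_nhdsWithin_of_tendsto_nhds_of_eventually_within
      · have : Filter.Tendsto (fun t : ℝ => t * c) (𝓝 0) (𝓝 (0 * c)) :=
          tendsto_id.mul_const c
        simpa using this.mono_left nhdsWithin_le_nhds
      · filter_upwards [self_mem_nhdsWithin] with t ht
        exact mul_pos ht hc
    have hmapeq : Filter.map (fun t : ℝ => t / c) (𝓝[>] (0 : ℝ)) = 𝓝[>] (0 : ℝ) := by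
      refine le_antisymm hmap1 ?_
      calc 𝓝[>] (0 : ℝ)
          = Filter.map ((fun t : ℝ => t / c) ∘ fun t : ℝ => t * c) (𝓝[>] (0 : ℝ)) := by
            have : ((fun t : ℝ => t / c) ∘ fun t : ℝ => t * c) = id := by
              funext t; simp [Function.comp, mul_div_cancel_right₀ _ hcne]
            rw [this, Filter.map_id]
        _ = Filter.map (fun t : ℝ => t / c) (Filter.map (fun t : ℝ => t * c) (𝓝[>] (0 : ℝ))) := by
            rw [Filter.map_map]
        _ ≤ Filter.map (fun t : ℝ => t / c) (𝓝[>] (0 : ℝ)) := Filter.map_mono hmap2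
    set φ : X × ℝ → X × ℝ := fun q => (q.1, q.2 / c) with hφdef
    set φ' : X × ℝ → X × ℝ := fun q => (q.1, q.2 * c) with hφ'def
    have hφt : Filter.Tendsto φ F F := by
      rw [hFdef]
      exact tendsto_fst.prodMk (hmap1.comp tendsto_snd)
    have hφ't : Filter.Tendsto φ' F F := by
      rw [hFdef]
      exact tendsto_fst.prodMk (hmap2.comp tendsto_snd)
    have hFeq : Filter.map φ F = F := by
      refine le_antisymm hφt ?_
      calc F = Filter.map (φ ∘ φ') F := by
            have : φ ∘ φ' = id := by
              funext q
              simp [hφdef, hφ'def, mul_div_cancel_right₀ _ hcne]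
            rw [this, Filter.map_id]
        _ = Filter.map φ (Filter.map φ' F) := by rw [Filter.map_map]
        _ ≤ Filter.map φ F := Filter.map_mono hφ't
    have hcomp : Q (c • h) ∘ φ = fun q => c * Q h q := by
      funext q
      simp only [Function.comp, hQdef, hφdef, smul_smul, div_mul_cancel₀ _ hcne]
      rw [div_div_eq_mul_div]
      ring
    have hcd : ∀ h' : X, clarkeDeriv f p h' = limsup (Q h') F := fun _ => rfl
    have step1 : clarkeDeriv f p (c • h) = limsup (fun q => c * Q h q) F := by
      conv_lhs => rw [hcd, ← hFeq]
      rw [← Filter.limsup_comp, hcomp]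
    rw [step1, hcd h]
    have hmono : Monotone (fun x : ℝ => c * x) :=
      fun a b hab => mul_le_mul_of_nonneg_left hab hc.le
    have := hmono.map_limsup_of_continuousAt (F := F) (Q h)
      ((continuous_const.mul continuous_id).continuousAt)
      (bddle h) ((bddge h).isCoboundedUnder_le)
    exact this.symm
  · -- subadditivity
    intro h₁ h₂
    set ψ : X × ℝ → X × ℝ := fun q => (q.1 + q.2 • h₁, q.2) with hψdef
    have hψ : Filter.Tendsto ψ F F := by
      rw [hFdef, hψdef]
      apply Filter.Tendsto.prodMk
      · have h1 : Filter.Tendsto (fun q : X × ℝ => q.1) ((𝓝 p) ×ˢ (𝓝[>] (0 : ℝ))) (𝓝 p) :=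
          tendsto_fst
        have h2 : Filter.Tendsto (fun q : X × ℝ => q.2 • h₁) ((𝓝 p) ×ˢ (𝓝[>] (0 : ℝ)))
            (𝓝 ((0 : ℝ) • h₁)) :=
          (tendsto_snd.mono_right nhdsWithin_le_nhds).smul_const h₁
        simpa using h1.add h2
      · exact tendsto_snd
    have hsplit : Q (h₁ + h₂) = (Q h₂ ∘ ψ) + Q h₁ := by
      funext q
      simp only [hQdef, hψdef, Pi.add_apply, Function.comp, smul_add]
      rw [← add_div, ← add_assoc, sub_add_sub_cancel]
    -- bounds for Q h₂ ∘ ψ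
    have key2 : ∀ᶠ q in F, |Q h₂ (ψ q)| ≤ (K : ℝ) * ‖h₂‖ := hψ.eventually (key h₂)
    have bddle2 : IsBoundedUnder (· ≤ ·) F (Q h₂ ∘ ψ) :=
      ⟨(K : ℝ) * ‖h₂‖, Filter.eventually_map.mpr <| key2.mono fun q hq => (abs_le.mp hq).2⟩
    have bddge2 : IsBoundedUnder (· ≥ ·) F (Q h₂ ∘ ψ) :=
      ⟨-((K : ℝ) * ‖h₂‖), Filter.eventually_map.mpr <| key2.mono fun q hq => (abs_le.mp hq).1⟩
    have hle1 : limsup (Q h₂ ∘ ψ) F ≤ limsup (Q h₂) F := by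
      rw [Filter.limsup_comp]
      haveI : (Filter.map ψ F).NeBot := Filter.NeBot.map inferInstance ψ
      refine limsup_le_limsup_of_le hψ ?_ (bddle h₂)
      refine IsBoundedUnder.isCoboundedUnder_le ⟨-((K : ℝ) * ‖h₂‖), ?_⟩
      rw [Filter.eventually_map (P := fun x => -((K : ℝ) * ‖h₂‖) ≤ x)]
      exact hψ.eventually <| (key h₂).mono fun q hq => (abs_le.mp hq).1
    have hadd : limsup ((Q h₂ ∘ ψ) + Q h₁) F ≤ limsup (Q h₂ ∘ ψ) F + limsup (Q h₁) F :=
      limsup_add_le bddge2 bddle2 ((bddge h₁).isCoboundedUnder_le) (bddle h₁)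
    have hcd : ∀ h' : X, clarkeDeriv f p h' = limsup (Q h') F := fun _ => rfl
    calc clarkeDeriv f p (h₁ + h₂) = limsup ((Q h₂ ∘ ψ) + Q h₁) F := by
          rw [hcd, hsplit]
      _ ≤ limsup (Q h₂ ∘ ψ) F + limsup (Q h₁) F := hadd
      _ ≤ limsup (Q h₂) F + limsup (Q h₁) F := by linarith
      _ = clarkeDeriv f p h₁ + clarkeDeriv f p h₂ := by
          rw [hcd, hcd]; ring
end

section
/- Let X be a real normed space, D ⊆ X open and convex, f : D → ℝ locally Lipschitz, and a, b ∈ D. Then there exist t ∈ (0,1) and ζ ∈ ∂ᶜf(a + t(b−a)) such that f(b) − f(a) = ζ(b − a). -/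
open Filter Topology Pointwise

set_option maxHeartbeats 2000000

variable {X : Type*} [NormedAddCommGroup X] [NormedSpace ℝ X]

section aux

variable {f : X → ℝ} {p : X} {K : NNReal} {U : Set X}

/-- eventual bound on difference quotients -/
lemma limsup_const_mul_le {α : Type*} {F : Filter α} [F.NeBot] {u : α → ℝ} {c : ℝ} (hc : 0 ≤ c)
    (h1 : IsBoundedUnder (· ≤ ·) F u) (h2 : IsBoundedUnder (· ≥ ·) F u) :
    limsup (fun x => c * u x) F ≤ c * limsup u F := by
  obtain ⟨B, hB⟩ := h2
  have hcb : IsCoboundedUnder (· ≤ ·) F (fun x => c * u x) :=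
    IsBoundedUnder.isCoboundedUnder_le
      ⟨c * B, eventually_map.2 <| (eventually_map.1 hB).mono
        fun x hx => mul_le_mul_of_nonneg_left hx hc⟩
  rcases eq_or_lt_of_le hc with rfl | hc'
  · have e : (fun x => (0:ℝ) * u x) = fun _ => (0:ℝ) := by funext x; ring
    rw [e, limsup_const, zero_mul]
  · apply le_of_forall_pos_le_add
    intro ε hε
    apply limsup_le_of_le hcb
    have hlt : limsup u F < limsup u F + ε / c := lt_add_of_pos_right _ (div_pos hε hc')
    filter_upwards [eventually_lt_of_limsup_lt hlt h1] with x hx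
    calc c * u x ≤ c * (limsup u F + ε / c) := mul_le_mul_of_nonneg_left hx.le hc
      _ = c * limsup u F + ε := by field_simp

lemma quot_bound (hU : U ∈ 𝓝 p) (hL : LipschitzOnWith K f U) (h : X) :
    ∀ᶠ q : X × ℝ in (𝓝 p) ×ˢ (𝓝[>] (0 : ℝ)),
      |(f (q.1 + q.2 • h) - f q.1) / q.2| ≤ (K : ℝ) * ‖h‖ := by
  obtain ⟨ε, hε, hball⟩ := Metric.mem_nhds_iff.1 hU
  have h1 : ∀ᶠ q : X × ℝ in (𝓝 p) ×ˢ (𝓝[>] (0 : ℝ)), q.1 ∈ Metric.ball p (ε/2) :=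
    Filter.Eventually.prod_inl (eventually_mem_set.2 (Metric.ball_mem_nhds p (by positivity))) _
  have h2 : ∀ᶠ q : X × ℝ in (𝓝 p) ×ˢ (𝓝[>] (0 : ℝ)),
      q.2 ∈ Set.Ioo 0 ((ε/2) / (‖h‖ + 1)) :=
    Filter.Eventually.prod_inr (eventually_mem_set.2 (Ioo_mem_nhdsGT_of_mem ⟨le_rfl, by positivity⟩)) _
  filter_upwards [h1, h2] with q hq1 hq2
  have hq2' : 0 < q.2 := hq2.1
  have hnorm : ‖q.2 • h‖ < ε / 2 := by
    rw [norm_smul, Real.norm_eq_abs, abs_of_pos hq2']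
    calc q.2 * ‖h‖ ≤ q.2 * (‖h‖ + 1) := by nlinarith [norm_nonneg h]
      _ < ((ε/2) / (‖h‖ + 1)) * (‖h‖ + 1) := by
          apply mul_lt_mul_of_pos_right hq2.2; positivity
      _ = ε / 2 := by field_simp
  have hx : q.1 ∈ U := hball (by
    have := hq1; rw [Metric.mem_ball] at this ⊢; linarith)
  have hxh : q.1 + q.2 • h ∈ U := by
    apply hball
    rw [Metric.mem_ball] at hq1 ⊢
    calc dist (q.1 + q.2 • h) p ≤ dist (q.1 + q.2 • h) q.1 + dist q.1 p := dist_triangle _ _ _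
      _ < ε / 2 + ε / 2 := by
          rw [dist_eq_norm, add_sub_cancel_left]; exact add_lt_add hnorm hq1
      _ = ε := by ring
  have hd := hL.dist_le_mul _ hxh _ hx
  rw [Real.dist_eq] at hd
  rw [abs_div, abs_of_pos hq2', div_le_iff₀ hq2']
  calc |f (q.1 + q.2 • h) - f q.1| ≤ K * dist (q.1 + q.2 • h) q.1 := hd
    _ = K * (q.2 * ‖h‖) := by
        rw [dist_eq_norm, add_sub_cancel_left, norm_smul, Real.norm_eq_abs, abs_of_pos hq2']
    _ = (K : ℝ) * ‖h‖ * q.2 := by ring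

lemma quot_bddAbove (hU : U ∈ 𝓝 p) (hL : LipschitzOnWith K f U) (h : X) :
    IsBoundedUnder (· ≤ ·) ((𝓝 p) ×ˢ (𝓝[>] (0 : ℝ)))
      (fun q : X × ℝ => (f (q.1 + q.2 • h) - f q.1) / q.2) :=
  ⟨(K : ℝ) * ‖h‖, eventually_map.2 <| (quot_bound hU hL h).mono fun _ hq => (abs_le.1 hq).2⟩

lemma quot_bddBelow (hU : U ∈ 𝓝 p) (hL : LipschitzOnWith K f U) (h : X) :
    IsBoundedUnder (· ≥ ·) ((𝓝 p) ×ˢ (𝓝[>] (0 : ℝ)))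
      (fun q : X × ℝ => (f (q.1 + q.2 • h) - f q.1) / q.2) :=
  ⟨-((K : ℝ) * ‖h‖), eventually_map.2 <| (quot_bound hU hL h).mono fun _ hq => (abs_le.1 hq).1⟩

lemma clarkeDeriv_le_bound (hU : U ∈ 𝓝 p) (hL : LipschitzOnWith K f U) (h : X) :
    clarkeDeriv f p h ≤ (K : ℝ) * ‖h‖ :=
  limsup_le_of_le ((quot_bddBelow hU hL h).isCoboundedUnder_le)
    ((quot_bound hU hL h).mono fun _ hq => (abs_le.1 hq).2)

lemma clarkeDeriv_zero' : clarkeDeriv f p 0 = 0 := by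
  have e : (fun q : X × ℝ => (f (q.1 + q.2 • (0:X)) - f q.1) / q.2) = fun _ => (0:ℝ) := by
    funext q; simp
  rw [clarkeDeriv, e, limsup_const]

lemma limsup_quot_comp_le (hU : U ∈ 𝓝 p) (hL : LipschitzOnWith K f U) (h : X)
    {m : X × ℝ → X × ℝ}
    (hm : Tendsto m ((𝓝 p) ×ˢ (𝓝[>] (0 : ℝ))) ((𝓝 p) ×ˢ (𝓝[>] (0 : ℝ)))) :
    limsup (fun q : X × ℝ => (f ((m q).1 + (m q).2 • h) - f (m q).1) / (m q).2)
      ((𝓝 p) ×ˢ (𝓝[>] (0 : ℝ))) ≤ clarkeDeriv f p h := by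
  have hb := hm.eventually (quot_bound hU hL h)
  have hco : IsCoboundedUnder (· ≤ ·) ((𝓝 p) ×ˢ (𝓝[>] (0 : ℝ)))
      (fun q : X × ℝ => (f ((m q).1 + (m q).2 • h) - f (m q).1) / (m q).2) :=
    IsBoundedUnder.isCoboundedUnder_le
      ⟨-((K : ℝ) * ‖h‖), eventually_map.2 <| hb.mono fun _ hq => (abs_le.1 hq).1⟩
  have : limsup (fun q : X × ℝ => (f ((m q).1 + (m q).2 • h) - f (m q).1) / (m q).2)
      ((𝓝 p) ×ˢ (𝓝[>] (0 : ℝ)))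
      = limsup (fun q : X × ℝ => (f (q.1 + q.2 • h) - f q.1) / q.2)
        (map m ((𝓝 p) ×ˢ (𝓝[>] (0 : ℝ)))) := by
    simp only [Filter.limsup, Filter.map_map]; rfl
  rw [this]
  refine limsup_le_limsup_of_le hm ?_ (quot_bddAbove hU hL h)
  simpa only [IsCoboundedUnder, Filter.map_map, Function.comp_def] using hco

lemma clarkeDeriv_add_le (hU : U ∈ 𝓝 p) (hL : LipschitzOnWith K f U) (h₁ h₂ : X) :
    clarkeDeriv f p (h₁ + h₂) ≤ clarkeDeriv f p h₁ + clarkeDeriv f p h₂ := by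
  set F := (𝓝 p) ×ˢ (𝓝[>] (0 : ℝ)) with hF
  set m : X × ℝ → X × ℝ := fun q => (q.1 + q.2 • h₂, q.2) with hm
  have hmt : Tendsto m F F := by
    apply Filter.Tendsto.prodMk
    · have : Tendsto (fun q : X × ℝ => q.1 + q.2 • h₂) F (𝓝 (p + (0:ℝ) • h₂)) :=
        (tendsto_fst.add ((tendsto_snd.mono_right nhdsWithin_le_nhds).smul_const h₂))
      simpa using this
    · exact tendsto_snd
  have key : (fun q : X × ℝ => (f (q.1 + q.2 • (h₁ + h₂)) - f q.1) / q.2)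
      = (fun q : X × ℝ => (f ((m q).1 + (m q).2 • h₁) - f (m q).1) / (m q).2)
        + (fun q : X × ℝ => (f (q.1 + q.2 • h₂) - f q.1) / q.2) := by
    funext q
    have e : q.1 + q.2 • (h₁ + h₂) = q.1 + q.2 • h₂ + q.2 • h₁ := by
      rw [smul_add]; abel
    simp only [Pi.add_apply, hm, e]
    rw [← add_div]
    ring_nf
  rw [clarkeDeriv, key]
  have hb := hmt.eventually (quot_bound hU hL h₁)
  refine limsup_add_le
    ⟨-((K : ℝ) * ‖h₁‖), eventually_map.2 <| hb.mono fun _ hq => (abs_le.1 hq).1⟩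
    ⟨(K : ℝ) * ‖h₁‖, eventually_map.2 <| hb.mono fun _ hq => (abs_le.1 hq).2⟩
    ((quot_bddBelow hU hL h₂).isCoboundedUnder_le)
    (quot_bddAbove hU hL h₂) |>.trans ?_
  exact add_le_add (limsup_quot_comp_le hU hL h₁ hmt) le_rfl

lemma clarkeDeriv_smul_le (hU : U ∈ 𝓝 p) (hL : LipschitzOnWith K f U) {c : ℝ} (hc : 0 < c)
    (h : X) : clarkeDeriv f p (c • h) ≤ c * clarkeDeriv f p h := by
  set F := (𝓝 p) ×ˢ (𝓝[>] (0 : ℝ)) with hF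
  set m : X × ℝ → X × ℝ := fun q => (q.1, c * q.2) with hm
  have hmt : Tendsto m F F := by
    apply Filter.Tendsto.prodMk tendsto_fst
    rw [tendsto_nhdsWithin_iff]
    constructor
    · have : Tendsto (fun q : X × ℝ => c * q.2) F (𝓝 (c * 0)) :=
        (tendsto_snd.mono_right nhdsWithin_le_nhds).const_mul c
      simpa using this
    · exact (eventually_mem_set.2 self_mem_nhdsWithin).prod_inr (𝓝 p) |>.mono
        fun q hq => by exact mul_pos hc hq
  have key : (fun q : X × ℝ => (f (q.1 + q.2 • (c • h)) - f q.1) / q.2)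
      = fun q : X × ℝ => c * ((f ((m q).1 + (m q).2 • h) - f (m q).1) / (m q).2) := by
    funext q
    simp only [hm]
    by_cases hq : q.2 = 0
    · simp [hq]
    · rw [smul_smul, mul_comm q.2 c]
      field_simp
  rw [clarkeDeriv, key]
  have hb := hmt.eventually (quot_bound hU hL h)
  have hbdd : IsBoundedUnder (· ≤ ·) F
      (fun q : X × ℝ => (f ((m q).1 + (m q).2 • h) - f (m q).1) / (m q).2) :=
    ⟨(K : ℝ) * ‖h‖, eventually_map.2 <| hb.mono fun _ hq => (abs_le.1 hq).2⟩
  have hblo : IsBoundedUnder (· ≥ ·) F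
      (fun q : X × ℝ => (f ((m q).1 + (m q).2 • h) - f (m q).1) / (m q).2) :=
    ⟨-((K : ℝ) * ‖h‖), eventually_map.2 <| hb.mono fun _ hq => (abs_le.1 hq).1⟩
  calc limsup (fun q : X × ℝ =>
        c * ((f ((m q).1 + (m q).2 • h) - f (m q).1) / (m q).2)) F
      ≤ c * limsup (fun q : X × ℝ =>
          (f ((m q).1 + (m q).2 • h) - f (m q).1) / (m q).2) F :=
        limsup_const_mul_le hc.le hbdd hblo
    _ ≤ c * clarkeDeriv f p h :=
        mul_le_mul_of_nonneg_left (limsup_quot_comp_le hU hL h hmt) hc.le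

lemma clarkeDeriv_smul (hU : U ∈ 𝓝 p) (hL : LipschitzOnWith K f U) {c : ℝ} (hc : 0 < c)
    (h : X) : clarkeDeriv f p (c • h) = c * clarkeDeriv f p h := by
  refine le_antisymm (clarkeDeriv_smul_le hU hL hc h) ?_
  have h2 := clarkeDeriv_smul_le hU hL (inv_pos.2 hc) (c • h)
  rw [smul_smul, inv_mul_cancel₀ hc.ne', one_smul] at h2
  calc c * clarkeDeriv f p h ≤ c * (c⁻¹ * clarkeDeriv f p (c • h)) :=
        mul_le_mul_of_nonneg_left h2 hc.le
    _ = clarkeDeriv f p (c • h) := by field_simp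

lemma le_clarkeDeriv_of (hU : U ∈ 𝓝 p) (hL : LipschitzOnWith K f U) (h : X) {m : ℝ → X}
    (hm : Tendsto m (𝓝[>] (0 : ℝ)) (𝓝 p)) {r : ℝ}
    (hr : ∀ᶠ l in 𝓝[>] (0 : ℝ), r ≤ (f (m l + l • h) - f (m l)) / l) :
    r ≤ clarkeDeriv f p h := by
  have hm' : Tendsto (fun l : ℝ => ((m l, l) : X × ℝ)) (𝓝[>] (0 : ℝ))
      ((𝓝 p) ×ˢ (𝓝[>] (0 : ℝ))) := hm.prodMk tendsto_id
  have hfreq : ∃ᶠ q : X × ℝ in (𝓝 p) ×ˢ (𝓝[>] (0 : ℝ)),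
      r ≤ (f (q.1 + q.2 • h) - f q.1) / q.2 :=
    hm'.frequently hr.frequently
  exact le_limsup_of_frequently_le hfreq (quot_bddAbove hU hL h)

end aux

/-- Lebourg's mean value theorem. -/
theorem lebourg_mean_value (D : Set X) (hD : IsOpen D) (hDconv : Convex ℝ D)
    (f : X → ℝ) (hf : LocallyLipschitzOnSet D f) (a b : X) (ha : a ∈ D) (hb : b ∈ D) :
    ∃ t ∈ Set.Ioo (0 : ℝ) 1, ∃ ζ ∈ clarkeGradient f (a + t • (b - a)),
      f b - f a = ζ (b - a) := by
  set v := b - a with hv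
  set γ := f b - f a with hγ
  set c' := f a - f b with hc'
  have hγc : γ = -c' := by rw [hγ, hc']; ring
  set g : ℝ → ℝ := fun s => f (a + s • v) + s * c' with hg
  have hseg : ∀ s ∈ Set.Icc (0:ℝ) 1, a + s • v ∈ D := by
    intro s hs
    have h1 : (1 - s) • a + s • b ∈ D :=
      hDconv ha hb (by linarith [hs.2]) hs.1 (by ring)
    have e : a + s • v = (1 - s) • a + s • b := by
      rw [hv]; module
    rwa [e]
  have hcont : ContinuousOn g (Set.Icc 0 1) := by
    intro s hs
    obtain ⟨K, U, hU, hL⟩ := hf _ (hseg s hs)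
    have hfc : ContinuousAt f (a + s • v) := hL.continuousOn.continuousAt hU
    have : ContinuousAt g s := by
      have hc1 : Continuous (fun s : ℝ => a + s • v) :=
        continuous_const.add (continuous_id.smul continuous_const)
      have hc2 : Continuous (fun s : ℝ => s * c') := continuous_id.mul continuous_const
      have h3 : ContinuousAt (fun s : ℝ => f (a + s • v)) s :=
        ContinuousAt.comp (g := f) (f := fun s : ℝ => a + s • v) hfc hc1.continuousAt
      exact h3.add hc2.continuousAt
    exact this.continuousWithinAt
  have h01 : g 0 = g 1 := by
    have e0 : a + (0:ℝ) • v = a := by simp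
    have e1 : a + (1:ℝ) • v = b := by rw [hv]; simp
    simp only [hg, e0, e1, hc']
    ring
  obtain ⟨t, htI, hext⟩ := exists_isLocalExtr_Ioo zero_lt_one hcont h01
  set p := a + t • v with hp
  have hpD : p ∈ D := hseg t ⟨htI.1.le, htI.2.le⟩
  obtain ⟨K, U, hU, hL⟩ := hf p hpD
  have hgf : ∀ s : ℝ, f (a + s • v) = g s - s * c' := fun s => by simp [hg]
  have hfp : f p = g t - t * c' := by rw [hp, hgf]
  have ht1 : Tendsto (fun l : ℝ => t + l) (𝓝[>] (0:ℝ)) (𝓝 t) := by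
    have : Tendsto (fun l : ℝ => t + l) (𝓝 (0:ℝ)) (𝓝 t) := by
      simpa using (continuous_add_left t).tendsto (0:ℝ)
    exact this.mono_left nhdsWithin_le_nhds
  have ht2 : Tendsto (fun l : ℝ => t - l) (𝓝[>] (0:ℝ)) (𝓝 t) := by
    have : Tendsto (fun l : ℝ => t - l) (𝓝 (0:ℝ)) (𝓝 t) := by
      simpa using (continuous_sub_left t).tendsto (0:ℝ)
    exact this.mono_left nhdsWithin_le_nhds
  have epos : ∀ᶠ l in 𝓝[>] (0:ℝ), (0:ℝ) < l := eventually_mem_set.2 self_mem_nhdsWithin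
  have key1 : γ ≤ clarkeDeriv f p v := by
    rcases hext with hmin | hmax
    · apply le_clarkeDeriv_of hU hL v (m := fun _ => p) tendsto_const_nhds
      filter_upwards [epos, ht1.eventually hmin] with l hl hgl
      have e1 : p + l • v = a + (t + l) • v := by rw [hp, add_smul]; abel
      rw [e1, hfp, hgf]
      have h0 : 0 ≤ (g (t + l) - g t) / l := div_nonneg (by linarith) hl.le
      have e2 : (g (t + l) - (t + l) * c' - (g t - t * c')) / l
          = (g (t + l) - g t) / l - c' := by field_simp; ring
      rw [e2]; linarith
    · have hmt : Tendsto (fun l : ℝ => p - l • v) (𝓝[>] (0:ℝ)) (𝓝 p) := by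
        have : Tendsto (fun l : ℝ => p - l • v) (𝓝 (0:ℝ)) (𝓝 p) := by
          have hc2 : Continuous (fun l : ℝ => p - l • v) :=
            continuous_const.sub (continuous_id.smul continuous_const)
          simpa using hc2.tendsto (0:ℝ)
        exact this.mono_left nhdsWithin_le_nhds
      apply le_clarkeDeriv_of hU hL v hmt
      filter_upwards [epos, ht2.eventually hmax] with l hl hgl
      have e0 : p - l • v + l • v = p := by abel
      have e1 : p - l • v = a + (t - l) • v := by rw [hp, sub_smul]; abel
      rw [e0, e1, hfp, hgf]
      have h0 : 0 ≤ (g t - g (t - l)) / l := div_nonneg (by linarith) hl.le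
      have e2 : (g t - t * c' - (g (t - l) - (t - l) * c')) / l
          = (g t - g (t - l)) / l - c' := by field_simp; ring
      rw [e2]; linarith
  have key2 : -γ ≤ clarkeDeriv f p (-v) := by
    rcases hext with hmin | hmax
    · apply le_clarkeDeriv_of hU hL (-v) (m := fun _ => p) tendsto_const_nhds
      filter_upwards [epos, ht2.eventually hmin] with l hl hgl
      have e1 : p + l • (-v) = a + (t - l) • v := by rw [hp, sub_smul, smul_neg]; abel
      rw [e1, hfp, hgf]
      have h0 : 0 ≤ (g (t - l) - g t) / l := div_nonneg (by linarith) hl.le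
      have e2 : (g (t - l) - (t - l) * c' - (g t - t * c')) / l
          = (g (t - l) - g t) / l + c' := by field_simp; ring
      rw [e2]; linarith
    · have hmt : Tendsto (fun l : ℝ => p + l • v) (𝓝[>] (0:ℝ)) (𝓝 p) := by
        have : Tendsto (fun l : ℝ => p + l • v) (𝓝 (0:ℝ)) (𝓝 p) := by
          have hc2 : Continuous (fun l : ℝ => p + l • v) :=
            continuous_const.add (continuous_id.smul continuous_const)
          simpa using hc2.tendsto (0:ℝ)
        exact this.mono_left nhdsWithin_le_nhds
      apply le_clarkeDeriv_of hU hL (-v) hmt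
      filter_upwards [epos, ht1.eventually hmax] with l hl hgl
      have e0 : p + l • v + l • (-v) = p := by rw [smul_neg]; abel
      have e1 : p + l • v = a + (t + l) • v := by rw [hp, add_smul]; abel
      rw [e0, e1, hfp, hgf]
      have h0 : 0 ≤ (g t - g (t + l)) / l := div_nonneg (by linarith) hl.le
      have e2 : (g t - t * c' - (g (t + l) - (t + l) * c')) / l
          = (g t - g (t + l)) / l + c' := by field_simp; ring
      rw [e2]; linarith
  -- Hahn–Banach extension
  have N_add : ∀ x y : X, clarkeDeriv f p (x + y) ≤ clarkeDeriv f p x + clarkeDeriv f p y :=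
    clarkeDeriv_add_le hU hL
  have N_hom : ∀ c : ℝ, 0 < c → ∀ x : X, clarkeDeriv f p (c • x) = c * clarkeDeriv f p x :=
    fun c hc x => clarkeDeriv_smul hU hL hc x
  have main : ∃ ζlin : X →ₗ[ℝ] ℝ, ζlin v = γ ∧ ∀ x, ζlin x ≤ clarkeDeriv f p x := by
    by_cases hv0 : v = 0
    · obtain ⟨ζlin, hζ1, hζ2⟩ := exists_extension_of_le_sublinear
        ⟨⊥, 0⟩ (clarkeDeriv f p) N_hom N_add
        (fun x => by
          have hx : (x : X) = 0 := (Submodule.mem_bot ℝ).1 x.2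
          simp [hx, clarkeDeriv_zero'])
      refine ⟨ζlin, ?_, hζ2⟩
      have hba0 : b - a = 0 := by rw [← hv]; exact hv0
      have hba : b = a := sub_eq_zero.1 hba0
      rw [hv0, map_zero, hγ, hba, sub_self]
    · obtain ⟨ζlin, hζ1, hζ2⟩ := exists_extension_of_le_sublinear
        (LinearPMap.mkSpanSingleton v γ hv0) (clarkeDeriv f p) N_hom N_add
        (fun x => by
          obtain ⟨r, hr⟩ := Submodule.mem_span_singleton.1 x.2
          have hxe : x = r • (⟨v, Submodule.mem_span_singleton_self v⟩ :
              (LinearPMap.mkSpanSingleton (K := ℝ) v γ hv0).domain) :=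
            Subtype.ext hr.symm
          rw [hxe, LinearPMap.map_smul, LinearPMap.mkSpanSingleton_apply ℝ ℝ hv0 γ, smul_eq_mul]
          simp only [SetLike.val_smul]
          rcases lt_trichotomy r 0 with hrneg | hr0 | hrpos
          · have e : r • v = (-r) • (-v) := by module
            rw [e, N_hom (-r) (by linarith) (-v)]
            nlinarith [key2]
          · subst hr0; simp [clarkeDeriv_zero']
          · rw [N_hom r hrpos v]
            exact mul_le_mul_of_nonneg_left key1 hrpos.le)
      refine ⟨ζlin, ?_, hζ2⟩
      have := hζ1 ⟨v, Submodule.mem_span_singleton_self v⟩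
      rwa [LinearPMap.mkSpanSingleton_apply] at this
  obtain ⟨ζlin, hζv, hζ2⟩ := main
  have hbound : ∀ x : X, ‖ζlin x‖ ≤ (K : ℝ) * ‖x‖ := by
    intro x
    rw [Real.norm_eq_abs]
    apply abs_le.2
    constructor
    · have h1 := (hζ2 (-x)).trans (clarkeDeriv_le_bound hU hL (-x))
      rw [map_neg, norm_neg] at h1
      linarith
    · exact (hζ2 x).trans (clarkeDeriv_le_bound hU hL x)
  refine ⟨t, htI, LinearMap.mkContinuous ζlin (K : ℝ) hbound, fun h => ?_, ?_⟩
  · simpa [LinearMap.mkContinuous_apply] using hζ2 h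
  · simp only [LinearMap.mkContinuous_apply]
    rw [hζv]
end
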